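/- Every nonidentity element f of Thompson's group F can be expressed uniquely in the form x_0^{a_0} x_1^{a_1} ⋯ x_n^{a_n} x_n^{-b_n} ⋯ x_1^{-b_1} x_0^{-b_0}, where n ≥ 0, a_0,…,a_n,b_0,…,b_n are nonnegative integers, and: (1) exactly one of a_n and b_n is nonzero; (2) whenever a_i > 0 and b_i > 0 for some i < n, either a_{i+1} > 0 or b_{i+1} > 0. -/

import Mathlib

/-- The defining relations of Thompson's group `F`:
`xₙ xₖ (xₖ xₙ₊₁)⁻¹` for all `k < n`. -/
def thompsonRels : Set (FreeGroup ℕ) :=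
  {r | ∃ n k : ℕ, k < n ∧
    r = FreeGroup.of n * FreeGroup.of k * (FreeGroup.of k * FreeGroup.of (n + 1))⁻¹}

/-- Thompson's group `F` as a presented group. -/
abbrev ThompsonF : Type := PresentedGroup thompsonRels

/-- The generator `xₙ` of Thompson's group `F`. -/
def xF (n : ℕ) : ThompsonF := PresentedGroup.of n

/-- Word length of `g` with respect to `{x₀, x₁}`: the least `m` such that `g`
is a product of `m` elements of `{x₀, x₁} ∪ {x₀, x₁}⁻¹`. -/
noncomputable def wordLength (g : ThompsonF) : ℕ :=
  sInf {m | ∃ l : List ThompsonF, l.length = m ∧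
    (∀ a ∈ l, a ∈ ({xF 0, xF 1} : Set ThompsonF) ∨ a⁻¹ ∈ ({xF 0, xF 1} : Set ThompsonF)) ∧
    l.prod = g}

/-- The product `x₀^{c₀} x₁^{c₁} ⋯ xₙ^{cₙ}`. -/
def posPart {n : ℕ} (c : Fin (n + 1) → ℕ) : ThompsonF :=
  (List.ofFn fun i : Fin (n + 1) => xF i ^ c i).prod

/-- `(n, a, b)` is a normal form for `f` if
`f = x₀^{a₀} ⋯ xₙ^{aₙ} xₙ^{-bₙ} ⋯ x₀^{-b₀}`, exactly one of `aₙ`, `bₙ` is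
nonzero, and whenever `aᵢ > 0` and `bᵢ > 0` for `i < n`, either `aᵢ₊₁ > 0`
or `bᵢ₊₁ > 0`. -/
def IsNormalForm (f : ThompsonF)
    (nf : Σ n : ℕ, (Fin (n + 1) → ℕ) × (Fin (n + 1) → ℕ)) : Prop :=
  f = posPart nf.2.1 * (posPart nf.2.2)⁻¹ ∧
  Xor' (0 < nf.2.1 (Fin.last nf.1)) (0 < nf.2.2 (Fin.last nf.1)) ∧
  ∀ i : Fin nf.1, 0 < nf.2.1 i.castSucc → 0 < nf.2.2 i.castSucc →
    (0 < nf.2.1 i.succ ∨ 0 < nf.2.2 i.succ)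
namespace ThompsonNF

open Finset in
lemma xF_rel {k n : ℕ} (h : k < n) : xF n * xF k = xF k * xF (n+1) := by
  have hr : FreeGroup.of n * FreeGroup.of k * (FreeGroup.of k * FreeGroup.of (n + 1))⁻¹
      ∈ thompsonRels := ⟨n, k, h, rfl⟩
  have h1 : PresentedGroup.mk thompsonRels
      (FreeGroup.of n * FreeGroup.of k * (FreeGroup.of k * FreeGroup.of (n + 1))⁻¹) = 1 := by
    refine (QuotientGroup.eq_one_iff _).2 ?_
    exact Subgroup.subset_normalClosure hr
  rw [map_mul, map_inv, map_mul] at h1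
  have h2 : xF n * xF k * (xF k * xF (n+1))⁻¹ = 1 := h1
  rw [mul_inv_eq_one] at h2
  exact h2

/-- push a single generator right through a power of a smaller-indexed generator. -/
lemma push_pow {s t : ℕ} (h : s < t) (c : ℕ) :
    xF t * xF s ^ c = xF s ^ c * xF (t + c) := by
  induction c generalizing t with
  | zero => simp
  | succ c ih =>
    rw [pow_succ', ← mul_assoc, xF_rel h, mul_assoc, ih (by omega), ← mul_assoc, ← pow_succ',
      show t + 1 + c = t + (c+1) by omega]

lemma push_pow_inv {s t : ℕ} (h : s < t) (c : ℕ) :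
    (xF t)⁻¹ * xF s ^ c = xF s ^ c * (xF (t + c))⁻¹ := by
  have h1 := push_pow h c
  have h2 : (xF t)⁻¹ * (xF s ^ c * xF (t + c)) * (xF (t+c))⁻¹ = (xF t)⁻¹ * xF s ^ c := by
    group
  rw [← h2, ← h1]
  group

/-- move a generator of smaller index left through a power, shifting it up. -/
lemma pull_pow {s t : ℕ} (h : t < s) (c : ℕ) :
    xF s ^ c * xF t = xF t * xF (s+1) ^ c := by
  induction c with
  | zero => simp
  | succ c ih =>
    rw [pow_succ, mul_assoc, xF_rel h, ← mul_assoc, ih, mul_assoc, ← pow_succ]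

lemma pull_pow_inv {s t : ℕ} (h : t < s) (c : ℕ) :
    (xF t)⁻¹ * xF s ^ c = xF (s+1) ^ c * (xF t)⁻¹ := by
  have h1 := pull_pow h c
  have h2 : (xF t)⁻¹ * (xF s ^ c * xF t) * (xF t)⁻¹ = (xF t)⁻¹ * xF s ^ c := by group
  rw [← h2, h1]
  group

/-- `x_s^{a s} x_{s+1}^{a (s+1)} ⋯` with `e` blocks starting at `s`. -/
def posF (a : ℕ → ℕ) : ℕ → ℕ → ThompsonF
  | _, 0 => 1
  | s, e+1 => xF s ^ a s * posF a (s+1) e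

lemma posF_congr {a b : ℕ → ℕ} : ∀ e s, (∀ i, s ≤ i → i < s + e → a i = b i) →
    posF a s e = posF b s e
  | 0, s, _ => rfl
  | e+1, s, h => by
    rw [posF, posF, h s (le_refl s) (by omega), posF_congr e (s+1) (fun i h1 h2 => h i (by omega) (by omega))]

lemma posF_append (a : ℕ → ℕ) : ∀ e₁ e₂ s, posF a s (e₁ + e₂) = posF a s e₁ * posF a (s + e₁) e₂
  | 0, e₂, s => by simp [posF]
  | e₁+1, e₂, s => by
    rw [show e₁ + 1 + e₂ = (e₁ + e₂) + 1 by omega, posF, posF, posF_append a e₁ e₂ (s+1),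
      mul_assoc, show s + (e₁+1) = s + 1 + e₁ by omega]

lemma posF_zero (a : ℕ → ℕ) : ∀ e s, (∀ i, s ≤ i → i < s + e → a i = 0) → posF a s e = 1
  | 0, s, _ => rfl
  | e+1, s, h => by
    rw [posF, h s (le_refl s) (by omega), posF_zero a e (s+1) (fun i h1 h2 => h i (by omega) (by omega))]
    simp

end ThompsonNF
namespace ThompsonNF

/-- Insertion point for a generator travelling right. -/
def ins (a : ℕ → ℕ) : ℕ → ℕ → ℕ → ℕ
  | 0, _, t => t
  | e+1, s, t => if t = s then s else ins a e (s+1) (t + a s)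

lemma ins_ge (a : ℕ → ℕ) : ∀ e s t, s ≤ t → s ≤ ins a e s t
  | 0, _, _, h => h
  | e+1, s, t, h => by
    rw [ins]
    split
    · exact le_refl s
    · exact le_trans (Nat.le_succ s) (ins_ge a e (s+1) (t + a s) (by omega))

lemma ins_lt (a : ℕ → ℕ) : ∀ e s t, s ≤ t →
    t + (∑ i ∈ Finset.range e, a (s+i)) < s + e → ins a e s t < s + e
  | 0, s, t, h, h2 => by omega
  | e+1, s, t, h, h2 => by
    rw [ins]
    split
    · omega
    · have hsum : ∑ i ∈ Finset.range (e+1), a (s+i)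
          = (∑ i ∈ Finset.range e, a (s+1+i)) + a s := by
        rw [Finset.sum_range_succ']
        congr 1
        · apply Finset.sum_congr rfl
          intro i _
          congr 1
          omega
      have := ins_lt a e (s+1) (t + a s) (by omega) (by omega)
      omega

/-- Travel lemma: multiplying a block word by `x_t` on the left inserts a letter. -/
lemma mul_posF (a : ℕ → ℕ) : ∀ e s t, s ≤ t →
    t + (∑ i ∈ Finset.range e, a (s+i)) < s + e →
    xF t * posF a s e
      = posF (fun i => if i = ins a e s t then a i + 1 else a i) s e
  | 0, s, t, h, h2 => by omega
  | e+1, s, t, h, h2 => by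
    have hsum : ∑ i ∈ Finset.range (e+1), a (s+i)
        = (∑ i ∈ Finset.range e, a (s+1+i)) + a s := by
      rw [Finset.sum_range_succ']
      congr 1
      apply Finset.sum_congr rfl
      intro i _
      congr 1
      omega
    rw [ins]
    by_cases hts : t = s
    · rw [if_pos hts, posF, posF, ← mul_assoc, hts, ← pow_succ']
      have h1 : (if s = s then a s + 1 else a s) = a s + 1 := if_pos rfl
      rw [h1]
      congr 1
      apply posF_congr
      intro i h1 h2
      simp only [if_neg (by omega : ¬ i = s)]
    · rw [if_neg hts, posF, posF, ← mul_assoc, push_pow (by omega) (a s), mul_assoc,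
        mul_posF a e (s+1) (t + a s) (by omega) (by omega)]
      have hge := ins_ge a e (s+1) (t + a s) (by omega)
      congr 1
      simp only [if_neg (by omega : ¬ s = ins a e (s+1) (t + a s))]

/-- Travelling an inverse letter right, cancellation case. -/
lemma inv_mul_posF_cancel (a : ℕ → ℕ) : ∀ e s t, s ≤ t →
    t + (∑ i ∈ Finset.range e, a (s+i)) < s + e →
    0 < a (ins a e s t) →
    (xF t)⁻¹ * posF a s e
      = posF (fun i => if i = ins a e s t then a i - 1 else a i) s e
  | 0, s, t, h, h2, _ => by omega
  | e+1, s, t, h, h2, hpos => by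
    have hsum : ∑ i ∈ Finset.range (e+1), a (s+i)
        = (∑ i ∈ Finset.range e, a (s+1+i)) + a s := by
      rw [Finset.sum_range_succ']
      congr 1
      apply Finset.sum_congr rfl
      intro i _
      congr 1
      omega
    rw [ins] at hpos ⊢
    by_cases hts : t = s
    · rw [if_pos hts] at hpos ⊢
      rw [posF, posF, ← mul_assoc, hts]
      have h1 : (if s = s then a s - 1 else a s) = a s - 1 := if_pos rfl
      rw [h1]
      conv_lhs => rw [show a s = (a s - 1) + 1 by omega, pow_succ', ← mul_assoc,
        inv_mul_cancel, one_mul]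
      congr 1
      apply posF_congr
      intro i h1 h2
      simp only [if_neg (by omega : ¬ i = s)]
    · rw [if_neg hts] at hpos ⊢
      rw [posF, posF, ← mul_assoc, push_pow_inv (by omega) (a s), mul_assoc,
        inv_mul_posF_cancel a e (s+1) (t + a s) (by omega) (by omega) hpos]
      have hge := ins_ge a e (s+1) (t + a s) (by omega)
      congr 1
      simp only [if_neg (by omega : ¬ s = ins a e (s+1) (t + a s))]

/-- An inverse letter of small index moves right through a block word, shifting it up. -/
lemma inv_shift (a : ℕ → ℕ) : ∀ e s t, t < s →
    (xF t)⁻¹ * posF a s e = posF (fun i => a (i-1)) (s+1) e * (xF t)⁻¹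
  | 0, s, t, _ => by rw [posF, posF, mul_one, one_mul]
  | e+1, s, t, h => by
    rw [posF, posF, ← mul_assoc, pull_pow_inv h (a s), mul_assoc,
      inv_shift a e (s+1) t (by omega), ← mul_assoc]
    norm_num

lemma shift_mul (a : ℕ → ℕ) (e s t : ℕ) (h : t < s) :
    posF a s e * xF t = xF t * posF (fun i => a (i-1)) (s+1) e := by
  have h1 := inv_shift a e s t h
  have h2 : xF t * ((xF t)⁻¹ * posF a s e) * xF t = posF a s e * xF t := by group
  rw [← h2, h1]
  group

/-- Result of shifting all blocks above `j` up by one (leaving an empty slot at `j+1`). -/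
def shiftUp (j : ℕ) (a : ℕ → ℕ) : ℕ → ℕ :=
  fun i => if i ≤ j then a i else if i = j+1 then 0 else a (i-1)

/-- Travelling an inverse letter right, no-cancellation case: it exits to the right. -/
lemma inv_mul_posF_shift (a : ℕ → ℕ) : ∀ e s t, s ≤ t →
    t + (∑ i ∈ Finset.range e, a (s+i)) < s + e →
    a (ins a e s t) = 0 →
    (xF t)⁻¹ * posF a s e
      = posF (shiftUp (ins a e s t) a) s (e+1) * (xF (ins a e s t))⁻¹
  | 0, s, t, h, h2, _ => by omega
  | e+1, s, t, h, h2, hzero => by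
    have hsum : ∑ i ∈ Finset.range (e+1), a (s+i)
        = (∑ i ∈ Finset.range e, a (s+1+i)) + a s := by
      rw [Finset.sum_range_succ']
      congr 1
      apply Finset.sum_congr rfl
      intro i _
      congr 1
      omega
    rw [ins] at hzero ⊢
    by_cases hts : t = s
    · rw [if_pos hts] at hzero ⊢
      subst hts
      rw [posF, hzero, pow_zero, one_mul, inv_shift a e (t+1) t (by omega)]
      rw [posF, posF]
      have e1 : shiftUp t a t = 0 := by simp [shiftUp, hzero]
      have e2 : shiftUp t a (t+1) = 0 := by
        simp only [shiftUp, if_neg (by omega : ¬ t+1 ≤ t), if_pos rfl]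
        simp
      rw [e1, e2, pow_zero, pow_zero, one_mul, one_mul]
      congr 1
      apply posF_congr
      intro i h1 h2
      simp only [shiftUp, if_neg (by omega : ¬ i ≤ t), if_neg (by omega : ¬ i = t + 1)]
    · rw [if_neg hts] at hzero ⊢
      rw [posF, ← mul_assoc, push_pow_inv (by omega) (a s), mul_assoc,
        inv_mul_posF_shift a e (s+1) (t + a s) (by omega) (by omega) hzero, ← mul_assoc]
      have hge := ins_ge a e (s+1) (t + a s) (by omega)
      conv_rhs => rw [posF]
      have e1 : shiftUp (ins a e (s+1) (t + a s)) a s = a s := by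
        simp only [shiftUp, if_pos (by omega : s ≤ ins a e (s+1) (t + a s))]
      rw [e1]

/-- Result of right multiplication by `x_t` on the positive word data. -/
def insR (t : ℕ) (b : ℕ → ℕ) : ℕ → ℕ :=
  fun i => if i < t then b i else if i = t then b t + 1 else if i = t+1 then 0 else b (i-1)

lemma posF_mul_right (b : ℕ → ℕ) (E t : ℕ) (h : t < E) :
    posF b 0 E * xF t = posF (insR t b) 0 (E+1) := by
  set w := E - t - 1 with hw
  have hE : E = t + (w + 1) := by omega
  have hE2 : E + 1 = t + (w + 2) := by omega
  have e1 : insR t b t = b t + 1 := by simp [insR]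
  have e2 : insR t b (t+1) = 0 := by
    simp only [insR, if_neg (by omega : ¬ t+1 < t), if_neg (by omega : ¬ t+1 = t), if_pos rfl]
    simp
  calc posF b 0 E * xF t
      = posF b 0 t * (xF t ^ b t * (posF b (t+1) w * xF t)) := by
        rw [hE, posF_append b t _ 0, zero_add, posF]
        group
    _ = posF b 0 t * (xF t ^ b t * (xF t * posF (fun i => b (i-1)) (t+1+1) w)) := by
        rw [shift_mul b w (t+1) t (by omega)]
    _ = posF b 0 t * (xF t ^ (b t + 1) * posF (fun i => b (i-1)) (t+2) w) := by
        rw [pow_succ]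
        group
    _ = posF (insR t b) 0 (E+1) := by
        rw [hE2, posF_append _ t _ 0, zero_add, posF, posF, e1, e2, pow_zero, one_mul]
        congr 1
        · apply posF_congr
          intro i h1 h2
          simp only [insR, if_pos (by omega : i < t)]
        · congr 1
          apply posF_congr
          intro i h1 h2
          simp only [insR, if_neg (by omega : ¬ i < t), if_neg (by omega : ¬ i = t),
            if_neg (by omega : ¬ i = t + 1)]

end ThompsonNF
namespace ThompsonNF

def elt (a b : ℕ → ℕ) (N : ℕ) : ThompsonF := posF a 0 N * (posF b 0 N)⁻¹

/-- normality condition -/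
def NC (a b : ℕ → ℕ) : Prop := ∀ i, 0 < a i → 0 < b i → (0 < a (i+1) ∨ 0 < b (i+1))

/-- bounded support -/
def Bd (N : ℕ) (a : ℕ → ℕ) : Prop := ∀ i, N ≤ i → a i = 0

lemma posF_pad (a : ℕ → ℕ) (N M : ℕ) (ha : Bd N a) (h : N ≤ M) :
    posF a 0 M = posF a 0 N := by
  rw [show M = N + (M - N) by omega, posF_append, zero_add,
    posF_zero a (M - N) N (fun i h1 _ => ha i h1), mul_one]

lemma elt_pad (a b : ℕ → ℕ) (N M : ℕ) (ha : Bd N a) (hb : Bd N b) (h : N ≤ M) :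
    elt a b M = elt a b N := by
  unfold elt
  rw [posF_pad a N M ha h, posF_pad b N M hb h]

lemma sum_pad (a : ℕ → ℕ) (N M : ℕ) (ha : Bd N a) (h : N ≤ M) :
    ∑ i ∈ Finset.range M, a i = ∑ i ∈ Finset.range N, a i := by
  symm
  apply Finset.sum_subset
  · exact Finset.range_subset_range.2 h
  · intro x _ hx
    exact ha x (by simpa using hx)

/-- reduction data -/
def red (i : ℕ) (c : ℕ → ℕ) : ℕ → ℕ :=
  fun j => if j < i then c j else if j = i then c i - 1 else c (j+1)

lemma conj_shift (a : ℕ → ℕ) (w i : ℕ) :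
    xF i * posF a (i+2) w * (xF i)⁻¹ = posF (fun j => a (j+1)) (i+1) w := by
  have h1 := inv_shift (fun j => a (j+1)) w (i+1) i (by omega)
  have h2 : posF (fun j => (fun j => a (j+1)) (j-1)) (i+1+1) w = posF a (i+2) w := by
    apply posF_congr
    intro j hj _
    simp only []
    congr 1
    omega
  rw [h2] at h1
  calc xF i * posF a (i+2) w * (xF i)⁻¹
      = xF i * (posF a (i+2) w * (xF i)⁻¹) := by rw [mul_assoc]
    _ = xF i * ((xF i)⁻¹ * posF (fun j => a (j+1)) (i+1) w) := by
        rw [← h1]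
    _ = posF (fun j => a (j+1)) (i+1) w := by group

lemma sum_split3 (g : ℕ → ℕ) (i w : ℕ) :
    ∑ j ∈ Finset.range (i+2+w), g j
      = ∑ j ∈ Finset.range i, g j + g i + g (i+1) + ∑ k ∈ Finset.range w, g (i+2+k) := by
  induction w with
  | zero => simp [Finset.sum_range_succ]
  | succ w ih =>
    rw [show i+2+(w+1) = (i+2+w)+1 by omega, Finset.sum_range_succ, ih,
      Finset.sum_range_succ]
    omega

lemma sum_red (c : ℕ → ℕ) (M i : ℕ) (hi : i + 2 ≤ M) (h1 : c (i+1) = 0) (hM : c M = 0)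
    (hci : 0 < c i) :
    ∑ j ∈ Finset.range M, red i c j + 1 = ∑ j ∈ Finset.range M, c j := by
  set w := M - i - 2 with hw
  have hM' : M = i + 2 + w := by omega
  rw [hM', sum_split3 (red i c) i w, sum_split3 c i w]
  have e0 : ∑ j ∈ Finset.range i, red i c j = ∑ j ∈ Finset.range i, c j := by
    apply Finset.sum_congr rfl
    intro j hj
    simp only [red, if_pos (Finset.mem_range.1 hj)]
  have e1 : red i c i = c i - 1 := by simp [red]
  have e2 : red i c (i+1) = c (i+2) := by
    simp only [red, if_neg (by omega : ¬ i+1 < i), if_neg (by omega : ¬ i+1 = i)]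
  have e3 : ∑ k ∈ Finset.range w, red i c (i+2+k) = ∑ k ∈ Finset.range w, c (i+3+k) := by
    apply Finset.sum_congr rfl
    intro k _
    simp only [red, if_neg (by omega : ¬ i+2+k < i), if_neg (by omega : ¬ i+2+k = i)]
    congr 1
    omega
  have e4 : c (i+2) + ∑ k ∈ Finset.range w, c (i+3+k) = ∑ k ∈ Finset.range w, c (i+2+k) := by
    have h8 := Finset.sum_range_succ' (fun k => c (i+2+k)) w
    have h5 : ∑ k ∈ Finset.range w, c (i+2+(k+1)) = ∑ k ∈ Finset.range w, c (i+3+k) := by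
      apply Finset.sum_congr rfl
      intro k _
      congr 1
      omega
    have h6 := Finset.sum_range_succ (fun k => c (i+2+k)) w
    have h7 : c (i+2+w) = 0 := by rw [show i+2+w = M by omega]; exact hM
    simp only [h5, h7, add_zero] at h8 h6
    omega
  rw [e0, e1, e2, e3]
  omega

lemma reduce_eq (a b : ℕ → ℕ) (N i : ℕ) (hiN : i + 2 ≤ N)
    (hai : 0 < a i) (hbi : 0 < b i) (ha1 : a (i+1) = 0) (hb1 : b (i+1) = 0)
    (haN : a N = 0) (hbN : b N = 0) :
    elt a b N = elt (red i a) (red i b) N := by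
  set w := N - i - 2 with hw
  have key : ∀ c : ℕ → ℕ, c (i+1) = 0 → c N = 0 →
      posF c 0 N = posF c 0 i * (xF i ^ c i * posF c (i+2) w) ∧
      posF (red i c) 0 N
        = posF c 0 i * (xF i ^ (c i - 1) * (xF i * posF c (i+2) w * (xF i)⁻¹)) := by
    intro c hc1 hcN
    constructor
    · rw [show N = i + ((w+1) + 1) by omega, posF_append c i ((w+1)+1) 0, zero_add, posF, posF,
        hc1, pow_zero, one_mul]
    · have hcs : xF i * posF c (i+2) w * (xF i)⁻¹ = posF (fun j => c (j+1)) (i+1) w :=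
        conj_shift c w i
      have hred0 : red i c (i+1+w) = 0 := by
        simp only [red, if_neg (by omega : ¬ i+1+w < i), if_neg (by omega : ¬ i+1+w = i)]
        rw [show i+1+w+1 = N by omega]
        exact hcN
      rw [hcs, show N = i + ((w+1) + 1) by omega, posF_append _ i ((w+1)+1) 0, zero_add, posF,
        posF_append _ w 1 (i+1),
        posF_zero (red i c) 1 (i+1+w) (fun j hj1 hj2 => by rwa [show j = i+1+w by omega]),
        mul_one]
      have e1 : red i c i = c i - 1 := by simp [red]
      rw [e1]
      congr 1
      · apply posF_congr
        intro j h1 h2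
        simp only [red, if_pos (by omega : j < i)]
      · congr 1
        apply posF_congr
        intro j h1 h2
        simp only [red, if_neg (by omega : ¬ j < i), if_neg (by omega : ¬ j = i)]
  obtain ⟨ka1, ka2⟩ := key a ha1 haN
  obtain ⟨kb1, kb2⟩ := key b hb1 hbN
  unfold elt
  rw [ka1, kb1, ka2, kb2]
  set p := a i - 1 with hp
  set q := b i - 1 with hq
  rw [show a i = p + 1 by omega, show b i = q + 1 by omega, pow_succ, pow_succ]
  group

end ThompsonNF
namespace ThompsonNF

lemma normalize : ∀ W a b N, Bd N a → Bd N b →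
    (∑ i ∈ Finset.range N, (a i + b i)) ≤ W →
    ∃ a' b' N', Bd N' a' ∧ Bd N' b' ∧ NC a' b' ∧ elt a b N = elt a' b' N' := by
  intro W
  induction W with
  | zero =>
    intro a b N ha hb hs
    refine ⟨a, b, N, ha, hb, ?_, rfl⟩
    intro i hai _
    exfalso
    have hiN : i < N := by
      by_contra hc
      rw [ha i (by omega)] at hai
      omega
    have h9 : a i + b i ≤ ∑ j ∈ Finset.range N, (a j + b j) := by
      simpa using Finset.single_le_sum (f := fun j => a j + b j)
        (fun j _ => Nat.zero_le _) (Finset.mem_range.2 hiN)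
    omega
  | succ W ih =>
    intro a b N ha hb hs
    by_cases hv : ∃ i, 0 < a i ∧ 0 < b i ∧ a (i+1) = 0 ∧ b (i+1) = 0
    · obtain ⟨i, h1, h2, h3, h4⟩ := hv
      have hiN : i < N := by
        by_contra hc
        rw [ha i (by omega)] at h1
        omega
      set M := N + 2 with hM
      have haM : Bd M a := fun j hj => ha j (by omega)
      have hbM : Bd M b := fun j hj => hb j (by omega)
      have hred : elt a b M = elt (red i a) (red i b) M :=
        reduce_eq a b M i (by omega) h1 h2 h3 h4 (ha M (by omega)) (hb M (by omega))
      have hBa : Bd M (red i a) := by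
        intro j hj
        simp only [red, if_neg (by omega : ¬ j < i)]
        split
        · omega
        · exact ha (j+1) (by omega)
      have hBb : Bd M (red i b) := by
        intro j hj
        simp only [red, if_neg (by omega : ¬ j < i)]
        split
        · omega
        · exact hb (j+1) (by omega)
      have hsa := sum_red a M i (by omega) h3 (ha M (by omega)) h1
      have hsb := sum_red b M i (by omega) h4 (hb M (by omega)) h2
      have hsum2 : ∑ j ∈ Finset.range M, (red i a j + red i b j) ≤ W := by
        have s1 : ∑ j ∈ Finset.range M, (red i a j + red i b j)
            = ∑ j ∈ Finset.range M, red i a j + ∑ j ∈ Finset.range M, red i b j :=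
          Finset.sum_add_distrib
        have s2 : ∑ j ∈ Finset.range M, (a j + b j)
            = ∑ j ∈ Finset.range M, a j + ∑ j ∈ Finset.range M, b j :=
          Finset.sum_add_distrib
        have s3 : ∑ j ∈ Finset.range M, (a j + b j) = ∑ j ∈ Finset.range N, (a j + b j) := by
          apply sum_pad
          · intro j hj
            show a j + b j = 0
            rw [ha j (by omega), hb j (by omega)]
          · omega
        omega
      obtain ⟨a', b', N', hN1, hN2, hN3, hN4⟩ := ih (red i a) (red i b) M hBa hBb hsum2
      refine ⟨a', b', N', hN1, hN2, hN3, ?_⟩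
      rw [← hN4, ← hred, elt_pad a b N M ha hb (by omega)]
    · push_neg at hv
      refine ⟨a, b, N, ha, hb, ?_, rfl⟩
      intro i hai hbi
      have := hv i
      omega

lemma step_mul (k : ℕ) (a b : ℕ → ℕ) (N : ℕ) (ha : Bd N a) (hb : Bd N b) :
    ∃ a' b' N', Bd N' a' ∧ Bd N' b' ∧ xF k * elt a b N = elt a' b' N' := by
  set E := N + k + (∑ i ∈ Finset.range N, a i) + 1 with hE
  have hsE : ∑ i ∈ Finset.range E, a (0+i) = ∑ i ∈ Finset.range N, a i := by
    simpa using sum_pad a N E ha (by omega)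
  have hbound : k + ∑ i ∈ Finset.range E, a (0+i) < 0 + E := by omega
  have haE : Bd E a := fun j hj => ha j (by omega)
  have hbE : Bd E b := fun j hj => hb j (by omega)
  have hlt := ins_lt a E 0 k (Nat.zero_le k) hbound
  refine ⟨fun i => if i = ins a E 0 k then a i + 1 else a i, b, E, ?_, hbE, ?_⟩
  · intro j hj
    simp only [if_neg (by omega : ¬ j = ins a E 0 k)]
    exact ha j (by omega)
  · rw [← elt_pad a b N E ha hb (by omega)]
    unfold elt
    rw [← mul_assoc, mul_posF a E 0 k (Nat.zero_le k) hbound]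

lemma step_inv (k : ℕ) (a b : ℕ → ℕ) (N : ℕ) (ha : Bd N a) (hb : Bd N b) :
    ∃ a' b' N', Bd N' a' ∧ Bd N' b' ∧ (xF k)⁻¹ * elt a b N = elt a' b' N' := by
  set E := N + k + (∑ i ∈ Finset.range N, a i) + 1 with hE
  have hsE : ∑ i ∈ Finset.range E, a (0+i) = ∑ i ∈ Finset.range N, a i := by
    simpa using sum_pad a N E ha (by omega)
  have hbound : k + ∑ i ∈ Finset.range E, a (0+i) < 0 + E := by omega
  have haE : Bd E a := fun j hj => ha j (by omega)
  have hbE : Bd E b := fun j hj => hb j (by omega)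
  have hlt := ins_lt a E 0 k (Nat.zero_le k) hbound
  rw [← elt_pad a b N E ha hb (by omega)]
  by_cases hc : 0 < a (ins a E 0 k)
  · refine ⟨fun i => if i = ins a E 0 k then a i - 1 else a i, b, E, ?_, hbE, ?_⟩
    · intro j hj
      simp only [if_neg (by omega : ¬ j = ins a E 0 k)]
      exact ha j (by omega)
    · unfold elt
      rw [← mul_assoc, inv_mul_posF_cancel a E 0 k (Nat.zero_le k) hbound hc]
  · refine ⟨shiftUp (ins a E 0 k) a, insR (ins a E 0 k) b, E + 1, ?_, ?_, ?_⟩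
    · intro j hj
      simp only [shiftUp, if_neg (by omega : ¬ j ≤ ins a E 0 k),
        if_neg (by omega : ¬ j = ins a E 0 k + 1)]
      exact ha (j-1) (by omega)
    · intro j hj
      simp only [insR, if_neg (by omega : ¬ j < ins a E 0 k),
        if_neg (by omega : ¬ j = ins a E 0 k), if_neg (by omega : ¬ j = ins a E 0 k + 1)]
      exact hb (j-1) (by omega)
    · unfold elt
      rw [← mul_assoc, inv_mul_posF_shift a E 0 k (Nat.zero_le k) hbound (by omega), mul_assoc]
      congr 1
      rw [← posF_mul_right b E (ins a E 0 k) (by omega)]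
      group

lemma exists_nf (f : ThompsonF) :
    ∃ a b N, Bd N a ∧ Bd N b ∧ NC a b ∧ f = elt a b N := by
  have hmem : f ∈ Subgroup.closure (Set.range xF) := by
    have h1 : Subgroup.closure (Set.range xF) = ⊤ := by
      have : Set.range xF
          = Set.range (PresentedGroup.of : ℕ → PresentedGroup thompsonRels) := rfl
      rw [this, PresentedGroup.closure_range_of]
    rw [h1]
    trivial
  induction hmem using Subgroup.closure_induction_left with
  | one =>
    refine ⟨fun _ => 0, fun _ => 0, 0, fun _ _ => rfl, fun _ _ => rfl, ?_, ?_⟩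
    · intro i h
      simp at h
    · simp [elt, posF]
  | mul_left x hx y hy ih =>
    obtain ⟨k, rfl⟩ := hx
    obtain ⟨a, b, N, h1, h2, h3, h4⟩ := ih
    obtain ⟨a', b', N', g1, g2, g4⟩ := step_mul k a b N h1 h2
    obtain ⟨a'', b'', N'', f1, f2, f3, f4⟩ := normalize
      (∑ i ∈ Finset.range N', (a' i + b' i)) a' b' N' g1 g2 (le_refl _)
    exact ⟨a'', b'', N'', f1, f2, f3, by rw [h4, g4, f4]⟩
  | inv_mul_cancel x hx y hy ih =>
    obtain ⟨k, rfl⟩ := hx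
    obtain ⟨a, b, N, h1, h2, h3, h4⟩ := ih
    obtain ⟨a', b', N', g1, g2, g4⟩ := step_inv k a b N h1 h2
    obtain ⟨a'', b'', N'', f1, f2, f3, f4⟩ := normalize
      (∑ i ∈ Finset.range N', (a' i + b' i)) a' b' N' g1 g2 (le_refl _)
    exact ⟨a'', b'', N'', f1, f2, f3, by rw [h4, g4, f4]⟩

end ThompsonNF
namespace ThompsonNF

noncomputable section

open Equiv

def g0fun : ℝ → ℝ := fun t => if t ≤ 0 then t else if t ≤ 2 then t/2 else t - 1
def f0fun : ℝ → ℝ := fun t => if t ≤ 0 then t else if t ≤ 1 then 2*t else t + 1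

def G0 : Equiv.Perm ℝ where
  toFun := g0fun
  invFun := f0fun
  left_inv := by
    intro t
    unfold g0fun f0fun
    split_ifs <;> linarith
  right_inv := by
    intro t
    unfold g0fun f0fun
    split_ifs <;> linarith

def Tr : Equiv.Perm ℝ := Equiv.addRight (1:ℝ)

lemma Tr_apply (t : ℝ) : Tr t = t + 1 := rfl

lemma Tr_pow_apply (n : ℕ) (t : ℝ) : (Tr^n) t = t + n := by
  induction n generalizing t with
  | zero => simp
  | succ n ih =>
    rw [pow_succ, Equiv.Perm.mul_apply, Tr_apply, ih]
    push_cast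
    ring

lemma Tr_pow_inv_apply (n : ℕ) (t : ℝ) : ((Tr^n)⁻¹) t = t - n := by
  have h1 : (Tr^n) (t - n) = t := by rw [Tr_pow_apply]; ring
  have h2 := Equiv.symm_apply_apply (Tr^n) (t - n)
  rw [h1] at h2
  exact h2

def Gm (n : ℕ) : Equiv.Perm ℝ := Tr^n * G0 * (Tr^n)⁻¹

lemma G0_apply (t : ℝ) : G0 t = g0fun t := rfl

lemma Gm_apply (n : ℕ) (t : ℝ) : Gm n t = g0fun (t - n) + n := by
  rw [Gm, Equiv.Perm.mul_apply, Equiv.Perm.mul_apply, Tr_pow_inv_apply, G0_apply,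
    Tr_pow_apply]

set_option maxHeartbeats 1000000 in
lemma rel_real (c t : ℝ) (hc : 1 ≤ c) :
    g0fun (g0fun t - c) + c = g0fun (g0fun (t - c - 1) + c + 1) := by
  unfold g0fun
  split_ifs <;> linarith

lemma Gm_rel {k n : ℕ} (h : k < n) : Gm n * Gm k = Gm k * Gm (n+1) := by
  ext t
  simp only [Equiv.Perm.mul_apply, Gm_apply]
  have hc : (1:ℝ) ≤ (n:ℝ) - k := by
    have : (k:ℝ) + 1 ≤ n := by exact_mod_cast h
    linarith
  have key := rel_real ((n:ℝ) - k) (t - k) hc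
  push_cast
  rw [show g0fun (t - (k:ℝ)) + (k:ℝ) - (n:ℝ) = g0fun (t - (k:ℝ)) - ((n:ℝ) - k) by ring,
    show t - ((n:ℝ)+1) = t - (k:ℝ) - ((n:ℝ) - (k:ℝ)) - 1 by ring,
    show g0fun (t - (k:ℝ) - ((n:ℝ) - (k:ℝ)) - 1) + ((n:ℝ)+1) - (k:ℝ)
      = g0fun (t - (k:ℝ) - ((n:ℝ) - (k:ℝ)) - 1) + ((n:ℝ) - (k:ℝ)) + 1 by ring]
  linarith [key]

lemma lift_rels : ∀ r ∈ thompsonRels, FreeGroup.lift Gm r = 1 := by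
  rintro r ⟨n, k, hkn, rfl⟩
  rw [map_mul, map_mul, map_inv, map_mul]
  simp only [FreeGroup.lift_apply_of]
  rw [Gm_rel hkn]
  group

def Phi : ThompsonF →* Equiv.Perm ℝ := PresentedGroup.toGroup lift_rels

lemma Phi_xF (n : ℕ) : Phi (xF n) = Gm n := PresentedGroup.toGroup.of lift_rels

def PmF (a : ℕ → ℕ) : ℕ → ℕ → Equiv.Perm ℝ
  | _, 0 => 1
  | s, e+1 => Gm s ^ a s * PmF a (s+1) e

lemma Phi_posF (a : ℕ → ℕ) : ∀ e s, Phi (posF a s e) = PmF a s e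
  | 0, s => by rw [posF, PmF, map_one]
  | e+1, s => by rw [posF, PmF, map_mul, map_pow, Phi_xF, Phi_posF a e (s+1)]

lemma PmF_congr {a b : ℕ → ℕ} : ∀ e s, (∀ i, s ≤ i → i < s + e → a i = b i) →
    PmF a s e = PmF b s e
  | 0, s, _ => rfl
  | e+1, s, h => by
    rw [PmF, PmF, h s (le_refl s) (by omega),
      PmF_congr e (s+1) (fun i h1 h2 => h i (by omega) (by omega))]

lemma PmF_one (a : ℕ → ℕ) : ∀ e s, (∀ i, s ≤ i → i < s + e → a i = 0) → PmF a s e = 1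
  | 0, s, _ => rfl
  | e+1, s, h => by
    rw [PmF, h s (le_refl s) (by omega),
      PmF_one a e (s+1) (fun i h1 h2 => h i (by omega) (by omega))]
    simp

lemma Gm_succ (s : ℕ) : Gm (s+1) = Tr * Gm s * Tr⁻¹ := by
  unfold Gm
  rw [pow_succ']
  group

lemma PmF_shift (a : ℕ → ℕ) : ∀ e s, PmF a (s+1) e = Tr * PmF (fun j => a (j+1)) s e * Tr⁻¹
  | 0, s => by rw [PmF, PmF, mul_one, mul_inv_cancel]
  | e+1, s => by
    rw [PmF, PmF, Gm_succ, conj_pow, PmF_shift a e (s+1)]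
    group

lemma pow_fix (σ : Equiv.Perm ℝ) (t : ℝ) (h : σ t = t) : ∀ c, (σ^c) t = t := by
  intro c
  induction c with
  | zero => simp
  | succ c ih => rw [pow_succ, Equiv.Perm.mul_apply, h, ih]

lemma Gm_fix (n : ℕ) (t : ℝ) (h : t ≤ n) : Gm n t = t := by
  rw [Gm_apply, g0fun, if_pos (by linarith : t - (n:ℝ) ≤ 0)]
  ring

lemma PmF_fix (a : ℕ → ℕ) : ∀ (e s : ℕ) (t : ℝ), t ≤ (s:ℝ) → PmF a s e t = t
  | 0, s, t, _ => rfl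
  | e+1, s, t, h => by
    rw [PmF, Equiv.Perm.mul_apply, PmF_fix a e (s+1) t (by push_cast; linarith),
      pow_fix _ _ (Gm_fix s t h)]

lemma perm_inv_fix (σ : Equiv.Perm ℝ) (t : ℝ) (h : σ t = t) : σ⁻¹ t = t := by
  conv_lhs => rw [← h]
  exact Equiv.symm_apply_apply σ t

lemma G0_pow_eq (c : ℕ) (x : ℝ) (h0 : 0 ≤ x) (h2 : x ≤ 2) : (Gm 0 ^ c) x = x / 2^c := by
  induction c generalizing x with
  | zero => simp
  | succ c ih =>
    have hg : Gm 0 x = x / 2 := by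
      rw [Gm_apply]
      push_cast
      rw [sub_zero, add_zero, g0fun]
      split_ifs <;> linarith
    rw [pow_succ, Equiv.Perm.mul_apply, hg, ih (x/2) (by linarith) (by linarith)]
    ring

lemma G0_pow_inv_eq (c : ℕ) (t : ℝ) (h0 : 0 ≤ t) (h2 : 2^c * t ≤ 2) :
    ((Gm 0 ^ c)⁻¹) t = 2^c * t := by
  have h1 : (Gm 0 ^ c) (2^c * t) = t := by
    rw [G0_pow_eq c _ (by positivity) h2]
    field_simp
  have h3 := Equiv.symm_apply_apply (Gm 0 ^ c) (2^c * t)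
  rw [h1] at h3
  exact h3

lemma PmF_small (a : ℕ → ℕ) : ∀ N, Bd N a → ∀ t : ℝ, 0 ≤ t → t ≤ 1 →
    PmF a 0 N t = t / 2 ^ (a 0) := by
  intro N hB t h0 h1
  cases N with
  | zero =>
    rw [hB 0 (le_refl 0), pow_zero]
    simp [PmF]
  | succ N =>
    rw [PmF, Equiv.Perm.mul_apply, PmF_fix a N 1 t (by push_cast; linarith),
      G0_pow_eq _ _ h0 (by linarith)]

def gp (a b : ℕ → ℕ) (N : ℕ) : Equiv.Perm ℝ := PmF a 0 N * (PmF b 0 N)⁻¹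

lemma gp_fix (a b : ℕ → ℕ) (N : ℕ) (t : ℝ) (h : t ≤ 0) : gp a b N t = t := by
  rw [gp, Equiv.Perm.mul_apply, perm_inv_fix _ _ (PmF_fix b N 0 t (by push_cast; linarith)),
    PmF_fix a N 0 t (by push_cast; linarith)]

lemma gp_germ (a b : ℕ → ℕ) (N : ℕ) (ha : Bd N a) (hb : Bd N b) (t : ℝ)
    (h0 : 0 ≤ t) (h1 : 2^(b 0) * t ≤ 1) :
    gp a b N t = 2^(b 0) * t / 2^(a 0) := by
  have hinv : (PmF b 0 N)⁻¹ t = 2^(b 0) * t := by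
    have h4 : PmF b 0 N (2^(b 0) * t) = t := by
      rw [PmF_small b N hb _ (by positivity) h1]
      field_simp
    have h3 := Equiv.symm_apply_apply (PmF b 0 N) (2^(b 0) * t)
    rw [h4] at h3
    exact h3
  rw [gp, Equiv.Perm.mul_apply, hinv, PmF_small a N ha _ (by positivity) h1]

lemma gp_decomp (a b : ℕ → ℕ) (N : ℕ) :
    gp a b (N+1) = Gm 0 ^ (a 0) *
      (Tr * gp (fun j => a (j+1)) (fun j => b (j+1)) N * Tr⁻¹) * (Gm 0 ^ (b 0))⁻¹ := by
  unfold gp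
  rw [PmF, PmF, PmF_shift a N 0, PmF_shift b N 0]
  group

end

end ThompsonNF
namespace ThompsonNF

noncomputable section

def NZ (a b : ℕ → ℕ) : Prop := ∃ i, 0 < a i + b i

def S : ℕ → (ℕ → ℕ) → (ℕ → ℕ) → ℝ
  | 0, _, _ => 0
  | N+1, a, b =>
    if a 0 = b 0 then (1 + S N (fun j => a (j+1)) (fun j => b (j+1))) / 2 ^ (a 0) else 0

lemma S_congr : ∀ (N : ℕ) (a b a' b' : ℕ → ℕ), (∀ i, a i = a' i) → (∀ i, b i = b' i) →
    S N a b = S N a' b'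
  | 0, _, _, _, _, _, _ => rfl
  | N+1, a, b, a', b', ha, hb => by
    simp only [S]
    rw [S_congr N _ _ _ _ (fun i => ha (i+1)) (fun i => hb (i+1)), ha 0, hb 0]

lemma Tr_inv_apply (t : ℝ) : Tr⁻¹ t = t - 1 := by
  have h := Tr_pow_inv_apply 1 t
  simpa using h

lemma gp_decomp_apply (a b : ℕ → ℕ) (N : ℕ) (t : ℝ) :
    gp a b (N+1) t
      = (Gm 0 ^ (a 0)) (gp (fun j => a (j+1)) (fun j => b (j+1)) N
          (((Gm 0 ^ (b 0))⁻¹) t - 1) + 1) := by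
  rw [gp_decomp]
  simp only [Equiv.Perm.mul_apply]
  rw [Tr_inv_apply, Tr_apply]

lemma one_le_two_pow (m : ℕ) : (1:ℝ) ≤ 2^m := one_le_pow₀ (by norm_num)

lemma two_le_two_pow (m : ℕ) (h : 1 ≤ m) : (2:ℝ) ≤ 2^m := by
  calc (2:ℝ) = 2^1 := by norm_num
    _ ≤ 2^m := by
      apply pow_le_pow_right₀ (by norm_num) h

lemma pow_two_inj {p q : ℕ} (h : (2:ℝ)^p = 2^q) : p = q := by
  have h1 : ((2^p : ℕ) : ℝ) = ((2^q : ℕ) : ℝ) := by push_cast; exact h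
  exact Nat.pow_right_injective (le_refl 2) (Nat.cast_inj.1 h1)

lemma NC_tail {a b : ℕ → ℕ} (h : NC a b) : NC (fun j => a (j+1)) (fun j => b (j+1)) :=
  fun i h1 h2 => h (i+1) h1 h2

lemma Bd_tail {N : ℕ} {a : ℕ → ℕ} (h : Bd (N+1) a) : Bd N (fun j => a (j+1)) :=
  fun i hi => h (i+1) (by omega)

lemma core : ∀ (N : ℕ) (a b : ℕ → ℕ), Bd N a → Bd N b → NC a b →
    (0 ≤ S N a b) ∧
    (0 < a 0 + b 0 → S N a b < 1) ∧
    (∀ t : ℝ, t ≤ S N a b → gp a b N t = t) ∧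
    (NZ a b → ∀ ε : ℝ, 0 < ε → ∃ t, S N a b < t ∧ t < S N a b + ε ∧ gp a b N t ≠ t) := by
  intro N
  induction N with
  | zero =>
    intro a b ha hb hnc
    have hgp : gp a b 0 = 1 := by
      rw [gp]
      simp [PmF]
    refine ⟨le_refl 0, ?_, ?_, ?_⟩
    · intro h
      rw [ha 0 (le_refl 0), hb 0 (le_refl 0)] at h
      omega
    · intro t ht
      rw [hgp]
      rfl
    · rintro ⟨i, hi⟩ ε hε
      rw [ha i (Nat.zero_le i), hb i (Nat.zero_le i)] at hi
      omega
  | succ N ih =>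
    intro a b ha hb hnc
    set ta := fun j => a (j+1) with hta
    set tb := fun j => b (j+1) with htb
    obtain ⟨ih1, ih2, ih3, ih4⟩ := ih ta tb (Bd_tail ha) (Bd_tail hb) (NC_tail hnc)
    set s1 := S N ta tb with hs1
    by_cases hbal : a 0 = b 0
    · have hS : S (N+1) a b = (1 + s1) / 2 ^ (a 0) := by
        simp only [S, if_pos hbal]
        rfl
      have hpow : (0:ℝ) < 2 ^ (a 0) := by positivity
      have hs1lt : 0 < a 0 → s1 < 1 := by
        intro hm
        apply ih2
        have := hnc 0 hm (by omega)
        simpa using this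
      refine ⟨?_, ?_, ?_, ?_⟩
      · rw [hS]
        positivity
      · intro hsum
        have hm : 0 < a 0 := by omega
        have := hs1lt hm
        rw [hS]
        rw [div_lt_one hpow]
        have h2 : (2:ℝ) ≤ 2 ^ (a 0) := two_le_two_pow _ hm
        linarith
      · intro t ht
        by_cases ht0 : t ≤ 0
        · exact gp_fix a b (N+1) t ht0
        · push_neg at ht0
          rw [hS] at ht
          rcases Nat.eq_zero_or_pos (a 0) with hm | hm
          · rw [gp_decomp_apply, ← hbal, hm, pow_zero, inv_one]
            simp only [Equiv.Perm.one_apply]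
            have ht' : t - 1 ≤ s1 := by
              rw [hm, pow_zero, div_one] at ht
              linarith
            rw [ih3 (t-1) ht']
            ring
          · have hs11 : s1 < 1 := hs1lt hm
            have hu2 : 2 ^ (a 0) * t ≤ 1 + s1 := by
              rw [mul_comm]
              exact (le_div_iff₀ hpow).1 ht
            have hzone : 2 ^ (a 0) * t ≤ 2 := by linarith
            rw [gp_decomp_apply, ← hbal, G0_pow_inv_eq _ _ (le_of_lt ht0) hzone]
            have ht' : 2 ^ (a 0) * t - 1 ≤ s1 := by linarith
            rw [ih3 _ ht']
            have e2 : 2 ^ (a 0) * t - 1 + 1 = 2 ^ (a 0) * t := by ring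
            rw [e2, G0_pow_eq _ _ (by positivity) hzone]
            field_simp
      · intro hnz ε hε
        have hNZt : NZ ta tb := by
          rcases Nat.eq_zero_or_pos (a 0) with hm | hm
          · obtain ⟨i, hi⟩ := hnz
            have hine : i ≠ 0 := by
              intro hi0
              rw [hi0] at hi
              omega
            exact ⟨i - 1, by simp only [hta, htb]; rw [show i - 1 + 1 = i by omega]; exact hi⟩
          · have := hnc 0 hm (by omega)
            exact ⟨0, by simp only [hta, htb]; omega⟩
        rcases Nat.eq_zero_or_pos (a 0) with hm | hm
        · obtain ⟨u, hu1, hu2, hu3⟩ := ih4 hNZt ε hε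
          refine ⟨1 + u, ?_, ?_, ?_⟩
          · rw [hS, hm, pow_zero, div_one]
            linarith
          · rw [hS, hm, pow_zero, div_one]
            linarith
          · rw [gp_decomp_apply, ← hbal, hm, pow_zero, inv_one]
            simp only [Equiv.Perm.one_apply]
            rw [show 1 + u - 1 = u by ring]
            intro hcon
            apply hu3
            linarith
        · have hs11 : s1 < 1 := hs1lt hm
          set ε' := min ε (1 - s1) with hε'
          have hε'pos : 0 < ε' := by
            apply lt_min hε
            linarith
          obtain ⟨u, hu1, hu2, hu3⟩ := ih4 hNZt ε' hε'pos
          have hu0 : 0 ≤ u := le_trans ih1 (le_of_lt hu1)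
          have hu4 : u < 1 := by
            have : ε' ≤ 1 - s1 := min_le_right _ _
            linarith
          refine ⟨(1 + u) / 2 ^ (a 0), ?_, ?_, ?_⟩
          · rw [hS]
            gcongr
          · rw [hS]
            have h1 : (1 + u) / 2 ^ (a 0) - (1 + s1) / 2 ^ (a 0) = (u - s1) / 2 ^ (a 0) := by
              ring
            have h2 : (u - s1) / 2 ^ (a 0) ≤ u - s1 := by
              apply div_le_self (by linarith) (one_le_two_pow _)
            have h3 : u - s1 < ε' := by linarith
            have h4 : ε' ≤ ε := min_le_left _ _
            linarith
          · have hzone : 2 ^ (a 0) * ((1 + u) / 2 ^ (a 0)) ≤ 2 := by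
              rw [mul_div_cancel₀ _ (ne_of_gt hpow)]
              linarith
            have hinv : ((Gm 0 ^ (b 0))⁻¹) ((1 + u) / 2 ^ (a 0)) = 1 + u := by
              rw [← hbal, G0_pow_inv_eq _ _ (by positivity) hzone,
                mul_div_cancel₀ _ (ne_of_gt hpow)]
            rw [gp_decomp_apply, hinv, show 1 + u - 1 = u by ring]
            intro hcon
            apply hu3
            have hval : (Gm 0 ^ (a 0)) (1 + u) = (1 + u) / 2 ^ (a 0) :=
              G0_pow_eq _ _ (by linarith) (by linarith)
            rw [← hval] at hcon
            have := (Gm 0 ^ (a 0)).injective hcon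
            linarith
    · have hS : S (N+1) a b = 0 := by
        simp only [S, if_neg hbal]
      refine ⟨le_of_eq hS.symm, by rw [hS]; norm_num, ?_, ?_⟩
      · intro t ht
        rw [hS] at ht
        exact gp_fix a b (N+1) t ht
      · intro _ ε hε
        have hpb : (0:ℝ) < 2 ^ (b 0) := by positivity
        set t := min (ε/2) (1 / 2^(b 0)) with htdef
        have ht0 : 0 < t := by
          apply lt_min (by linarith)
          positivity
        have htb1 : 2^(b 0) * t ≤ 1 := by
          have : t ≤ 1 / 2^(b 0) := min_le_right _ _
          rw [le_div_iff₀ hpb] at this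
          linarith
        refine ⟨t, by rw [hS]; exact ht0, ?_, ?_⟩
        · rw [hS]
          have : t ≤ ε/2 := min_le_left _ _
          linarith
        · rw [gp_germ a b (N+1) ha hb t (le_of_lt ht0) htb1]
          intro hcon
          apply hbal
          have hpa : (0:ℝ) < 2 ^ (a 0) := by positivity
          rw [div_eq_iff (ne_of_gt hpa)] at hcon
          have : (2:ℝ)^(b 0) = 2^(a 0) := by
            have htne : t ≠ 0 := ne_of_gt ht0
            rw [mul_comm t] at hcon
            exact mul_right_cancel₀ htne hcon
          exact (pow_two_inj this).symm

end

end ThompsonNF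
namespace ThompsonNF

noncomputable section

lemma not_NZ {a b : ℕ → ℕ} (h : ¬ NZ a b) : ∀ i, a i = 0 ∧ b i = 0 := by
  intro i
  rw [NZ] at h
  push_neg at h
  have := h i
  omega

lemma gp_one_of_zero (a b : ℕ → ℕ) (N : ℕ) (h : ∀ i, a i = 0 ∧ b i = 0) :
    gp a b N = 1 := by
  rw [gp, PmF_one a N 0 (fun i _ _ => (h i).1), PmF_one b N 0 (fun i _ _ => (h i).2),
    inv_one, mul_one]

lemma gp_congr {a b a' b' : ℕ → ℕ} (N : ℕ) (ha : ∀ i, a i = a' i) (hb : ∀ i, b i = b' i) :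
    gp a b N = gp a' b' N := by
  rw [gp, gp, PmF_congr N 0 (fun i _ _ => ha i), PmF_congr N 0 (fun i _ _ => hb i)]

lemma peel (c : ℕ → ℕ) (m N : ℕ) (hm : m ≤ c 0) :
    PmF c 0 (N+1) = Gm 0 ^ (c 0 - m) * PmF (fun i => if i = 0 then m else c i) 0 (N+1) := by
  rw [PmF, PmF]
  have e0 : (if (0:ℕ) = 0 then m else c 0) = m := if_pos rfl
  rw [e0]
  have e1 : PmF (fun i => if i = 0 then m else c i) 1 N = PmF c 1 N := by
    apply PmF_congr
    intro i h1 _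
    simp only [if_neg (by omega : ¬ i = 0)]
  rw [e1, ← mul_assoc, ← pow_add, Nat.sub_add_cancel hm]

lemma gp_peel (a b : ℕ → ℕ) (m N : ℕ) (hma : m ≤ a 0) (hmb : m ≤ b 0) :
    gp a b (N+1) = Gm 0 ^ (a 0 - m) *
      gp (fun i => if i = 0 then m else a i) (fun i => if i = 0 then m else b i) (N+1) *
      (Gm 0 ^ (b 0 - m))⁻¹ := by
  rw [gp, gp, peel a m N hma, peel b m N hmb]
  group

lemma pigeon (m m' : ℕ) (x x' : ℝ) (h0 : 0 ≤ x) (h0' : 0 ≤ x')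
    (h1 : 1 ≤ m → x < 1) (h1' : 1 ≤ m' → x' < 1)
    (he : (1+x)/2^m = (1+x')/2^(m')) : m = m' := by
  by_contra hne
  have main : ∀ (p q : ℕ) (y y' : ℝ), 0 ≤ y → 0 ≤ y' → (1 ≤ q → y' < 1) → p < q →
      (1+y)/2^p ≠ (1+y')/2^q := by
    intro p q y y' hy hy' hq hpq heq
    have hq1 : 1 ≤ q := by omega
    have hy'1 : y' < 1 := hq hq1
    have hp : (0:ℝ) < 2^p := by positivity
    have hq2 : (0:ℝ) < 2^q := by positivity
    have hle : (2:ℝ)^(p+1) ≤ 2^q := by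
      apply pow_le_pow_right₀ (by norm_num)
      omega
    have h2 : (1+y)/2^p ≥ 1/2^p := by gcongr <;> linarith
    have h3 : (1+y')/2^q < 2/2^q := by gcongr <;> linarith
    have h4 : (2:ℝ)/2^q ≤ 2/2^(p+1) := by gcongr <;> norm_num
    have h5 : (2:ℝ)/2^(p+1) = 1/2^p := by
      rw [pow_succ]
      field_simp
    linarith
  rcases Nat.lt_or_ge m m' with h | h
  · exact main m m' x x' h0 h0' h1' h he
  · have h' : m' < m := by omega
    exact main m' m x' x h0' h0 h1 h' he.symm

lemma inj : ∀ (N : ℕ) (a b a' b' : ℕ → ℕ), Bd N a → Bd N b → Bd N a' → Bd N b' →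
    NC a b → NC a' b' → gp a b N = gp a' b' N → ∀ i, a i = a' i ∧ b i = b' i := by
  intro N
  induction N with
  | zero =>
    intro a b a' b' ha hb ha' hb' _ _ _ i
    rw [ha i (Nat.zero_le i), hb i (Nat.zero_le i), ha' i (Nat.zero_le i),
      hb' i (Nat.zero_le i)]
    exact ⟨rfl, rfl⟩
  | succ N ih =>
    intro a b a' b' ha hb ha' hb' hnc hnc' heq
    set ta := fun j => a (j+1) with hta
    set tb := fun j => b (j+1) with htb
    set ta' := fun j => a' (j+1) with hta'
    set tb' := fun j => b' (j+1) with htb'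
    -- dispose of the zero cases
    have hzero_case : ∀ (c d c' d' : ℕ → ℕ), Bd (N+1) c' → Bd (N+1) d' → NC c' d' →
        gp c d (N+1) = gp c' d' (N+1) →
        (∀ i, c i = 0 ∧ d i = 0) → ∀ i, c' i = 0 ∧ d' i = 0 := by
      intro c d c' d' hc' hd' hnc'' heq' hzero
      by_contra hcon
      have hnz' : NZ c' d' := by
        rw [NZ]
        by_contra hx
        exact hcon (not_NZ hx)
      obtain ⟨t, _, _, ht3⟩ := (core (N+1) c' d' hc' hd' hnc'').2.2.2 hnz' 1 (by norm_num)
      apply ht3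
      rw [← heq', gp_one_of_zero c d (N+1) hzero]
      rfl
    by_cases hz : NZ a b
    swap
    · have hzero := not_NZ hz
      have hzero' := hzero_case a b a' b' ha' hb' hnc' heq hzero
      intro i
      rw [(hzero i).1, (hzero i).2, (hzero' i).1, (hzero' i).2]
      exact ⟨rfl, rfl⟩
    by_cases hz' : NZ a' b'
    swap
    · have hzero' := not_NZ hz'
      have hzero := hzero_case a' b' a b ha hb hnc heq.symm hzero'
      intro i
      rw [(hzero i).1, (hzero i).2, (hzero' i).1, (hzero' i).2]
      exact ⟨rfl, rfl⟩
    -- germ comparison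
    have hpa : (0:ℝ) < 2^(a 0) := by positivity
    have hpb : (0:ℝ) < 2^(b 0) := by positivity
    have hpa' : (0:ℝ) < 2^(a' 0) := by positivity
    have hpb' : (0:ℝ) < 2^(b' 0) := by positivity
    set t0 := min ((1:ℝ)/2^(b 0)) ((1:ℝ)/2^(b' 0)) with ht0def
    have ht0 : 0 < t0 := by
      apply lt_min <;> positivity
    have happ : gp a b (N+1) t0 = gp a' b' (N+1) t0 := by rw [heq]
    rw [gp_germ a b (N+1) ha hb t0 (le_of_lt ht0)
        (by rw [mul_comm]; exact (le_div_iff₀ hpb).1 (min_le_left _ _)),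
      gp_germ a' b' (N+1) ha' hb' t0 (le_of_lt ht0)
        (by rw [mul_comm]; exact (le_div_iff₀ hpb').1 (min_le_right _ _))] at happ
    have hkey : b 0 + a' 0 = b' 0 + a 0 := by
      apply pow_two_inj
      rw [pow_add, pow_add]
      rw [div_eq_div_iff (ne_of_gt hpa) (ne_of_gt hpa')] at happ
      have ht0ne : t0 ≠ 0 := ne_of_gt ht0
      have h9 : 2 ^ b 0 * 2 ^ a' 0 * t0 = 2 ^ b' 0 * 2 ^ a 0 * t0 := by
        linear_combination happ
      exact mul_right_cancel₀ ht0ne h9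
    set m := min (a 0) (b 0) with hm
    set m' := min (a' 0) (b' 0) with hm'
    have hd1 : a 0 - m = a' 0 - m' := by omega
    have hd2 : b 0 - m = b' 0 - m' := by omega
    set aT := fun i => if i = 0 then m else a i with haT
    set bT := fun i => if i = 0 then m else b i with hbT
    set aT' := fun i => if i = 0 then m' else a' i with haT'
    set bT' := fun i => if i = 0 then m' else b' i with hbT'
    have hBaT : Bd (N+1) aT := by
      intro j hj
      simp only [haT, if_neg (by omega : ¬ j = 0)]
      exact ha j hj
    have hBbT : Bd (N+1) bT := by
      intro j hj
      simp only [hbT, if_neg (by omega : ¬ j = 0)]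
      exact hb j hj
    have hBaT' : Bd (N+1) aT' := by
      intro j hj
      simp only [haT', if_neg (by omega : ¬ j = 0)]
      exact ha' j hj
    have hBbT' : Bd (N+1) bT' := by
      intro j hj
      simp only [hbT', if_neg (by omega : ¬ j = 0)]
      exact hb' j hj
    have hncT : NC aT bT := by
      intro i h1 h2
      rcases Nat.eq_zero_or_pos i with hi | hi
      · subst hi
        simp only [haT, hbT, if_pos rfl] at h1 h2
        have := hnc 0 (by omega) (by omega)
        simp only [haT, hbT, if_neg (by omega : ¬ (0:ℕ)+1 = 0)]
        exact this
      · simp only [haT, hbT, if_neg (by omega : ¬ i = 0)] at h1 h2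
        have := hnc i h1 h2
        simp only [haT, hbT, if_neg (by omega : ¬ i+1 = 0)]
        exact this
    have hncT' : NC aT' bT' := by
      intro i h1 h2
      rcases Nat.eq_zero_or_pos i with hi | hi
      · subst hi
        simp only [haT', hbT', if_pos rfl] at h1 h2
        have := hnc' 0 (by omega) (by omega)
        simp only [haT', hbT', if_neg (by omega : ¬ (0:ℕ)+1 = 0)]
        exact this
      · simp only [haT', hbT', if_neg (by omega : ¬ i = 0)] at h1 h2
        have := hnc' i h1 h2
        simp only [haT', hbT', if_neg (by omega : ¬ i+1 = 0)]
        exact this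
    -- peeled equality
    have heqT : gp aT bT (N+1) = gp aT' bT' (N+1) := by
      have e1 := gp_peel a b m N (by omega) (by omega)
      have e2 := gp_peel a' b' m' N (by omega) (by omega)
      rw [e1, e2, hd1, hd2] at heq
      have := mul_left_cancel (mul_right_cancel heq)
      exact this
    by_cases hzT : NZ aT bT
    · have hzT' : NZ aT' bT' := by
        rw [NZ]
        by_contra hx
        have hzero' := not_NZ hx
        obtain ⟨t, _, _, ht3⟩ := (core (N+1) aT bT hBaT hBbT hncT).2.2.2 hzT 1 (by norm_num)
        apply ht3
        rw [heqT, gp_one_of_zero aT' bT' (N+1) hzero']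
        rfl
      -- S equality
      have hseq : S (N+1) aT bT = S (N+1) aT' bT' := by
        rcases lt_trichotomy (S (N+1) aT bT) (S (N+1) aT' bT') with h | h | h
        · exfalso
          obtain ⟨t, ht1, ht2, ht3⟩ := (core (N+1) aT bT hBaT hBbT hncT).2.2.2 hzT
            (S (N+1) aT' bT' - S (N+1) aT bT) (by linarith)
          apply ht3
          rw [heqT]
          exact (core (N+1) aT' bT' hBaT' hBbT' hncT').2.2.1 t (by linarith)
        · exact h
        · exfalso
          obtain ⟨t, ht1, ht2, ht3⟩ := (core (N+1) aT' bT' hBaT' hBbT' hncT').2.2.2 hzT'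
            (S (N+1) aT bT - S (N+1) aT' bT') (by linarith)
          apply ht3
          rw [← heqT]
          exact (core (N+1) aT bT hBaT hBbT hncT).2.2.1 t (by linarith)
      -- S formulas
      have hSf : S (N+1) aT bT = (1 + S N ta tb) / 2^m := by
        have e0 : aT 0 = bT 0 := by simp [haT, hbT]
        simp only [S, if_pos e0]
        rw [S_congr N (fun j => aT (j+1)) (fun j => bT (j+1)) ta tb
          (fun i => by simp [haT, hta]) (fun i => by simp [hbT, htb])]
        simp [haT]
      have hSf' : S (N+1) aT' bT' = (1 + S N ta' tb') / 2^(m') := by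
        have e0 : aT' 0 = bT' 0 := by simp [haT', hbT']
        simp only [S, if_pos e0]
        rw [S_congr N (fun j => aT' (j+1)) (fun j => bT' (j+1)) ta' tb'
          (fun i => by simp [haT', hta']) (fun i => by simp [hbT', htb'])]
        simp [haT']
      obtain ⟨c1, _, _, _⟩ := core N ta tb (Bd_tail ha) (Bd_tail hb) (NC_tail hnc)
      obtain ⟨c1', _, _, _⟩ := core N ta' tb' (Bd_tail ha') (Bd_tail hb') (NC_tail hnc')
      have hmm : m = m' := by
        apply pigeon m m' (S N ta tb) (S N ta' tb') c1 c1' ?_ ?_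
        · rw [← hSf, ← hSf', hseq]
        · intro h1
          apply (core N ta tb (Bd_tail ha) (Bd_tail hb) (NC_tail hnc)).2.1
          have := hnc 0 (by omega) (by omega)
          simpa using this
        · intro h1
          apply (core N ta' tb' (Bd_tail ha') (Bd_tail hb') (NC_tail hnc')).2.1
          have := hnc' 0 (by omega) (by omega)
          simpa using this
      have ha0 : a 0 = a' 0 := by omega
      have hb0 : b 0 = b' 0 := by omega
      -- cancel down to tails
      have htails : gp ta tb N = gp ta' tb' N := by
        have d1 := gp_decomp aT bT N
        have d2 := gp_decomp aT' bT' N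
        have e0 : aT 0 = m := by simp [haT]
        have e0b : bT 0 = m := by simp [hbT]
        have e0' : aT' 0 = m' := by simp [haT']
        have e0b' : bT' 0 = m' := by simp [hbT']
        have egp : gp (fun j => aT (j+1)) (fun j => bT (j+1)) N = gp ta tb N :=
          gp_congr N (fun i => by simp [haT, hta]) (fun i => by simp [hbT, htb])
        have egp' : gp (fun j => aT' (j+1)) (fun j => bT' (j+1)) N = gp ta' tb' N :=
          gp_congr N (fun i => by simp [haT', hta']) (fun i => by simp [hbT', htb'])
        rw [e0, e0b, egp] at d1
        rw [e0', e0b', egp', ← hmm] at d2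
        rw [d1, d2] at heqT
        have h5 := mul_left_cancel (mul_right_cancel heqT)
        have h6 := mul_left_cancel (mul_right_cancel h5)
        exact h6
      intro i
      rcases Nat.eq_zero_or_pos i with hi | hi
      · subst hi
        exact ⟨ha0, hb0⟩
      · have := ih ta tb ta' tb' (Bd_tail ha) (Bd_tail hb) (Bd_tail ha') (Bd_tail hb')
          (NC_tail hnc) (NC_tail hnc') htails (i-1)
        simp only [hta, htb, hta', htb'] at this
        rw [show i - 1 + 1 = i by omega] at this
        exact this
    · -- peeled left is zero
      have hzeroT := not_NZ hzT
      have hzeroT' := hzero_case aT bT aT' bT' hBaT' hBbT' hncT' heqT hzeroT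
      have hm0 : m = 0 := by
        have := (hzeroT 0).1
        simp only [haT, if_pos rfl] at this
        exact this
      have hm0' : m' = 0 := by
        have := (hzeroT' 0).1
        simp only [haT', if_pos rfl] at this
        exact this
      intro i
      rcases Nat.eq_zero_or_pos i with hi | hi
      · subst hi
        constructor <;> omega
      · have h1 := hzeroT i
        have h2 := hzeroT' i
        simp only [haT, hbT, haT', hbT', if_neg (by omega : ¬ i = 0)] at h1 h2
        rw [h1.1, h1.2, h2.1, h2.2]
        exact ⟨rfl, rfl⟩

end

end ThompsonNF
namespace ThompsonNF

lemma Phi_elt (a b : ℕ → ℕ) (N : ℕ) : Phi (elt a b N) = gp a b N := by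
  rw [elt, map_mul, map_inv, Phi_posF, Phi_posF, gp]

lemma elt_inj {a b a' b' : ℕ → ℕ} {N : ℕ} (hBa : Bd N a) (hBb : Bd N b)
    (hBa' : Bd N a') (hBb' : Bd N b') (hnc : NC a b) (hnc' : NC a' b')
    (h : elt a b N = elt a' b' N) : ∀ i, a i = a' i ∧ b i = b' i := by
  apply inj N a b a' b' hBa hBb hBa' hBb' hnc hnc'
  rw [← Phi_elt, ← Phi_elt, h]

lemma ofFn_posF : ∀ (n s : ℕ) (c : ℕ → ℕ),
    (List.ofFn fun i : Fin (n+1) => xF (s + (i:ℕ)) ^ c (s + (i:ℕ))).prod = posF c s (n+1) := by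
  intro n
  induction n with
  | zero =>
    intro s c
    simp [posF]
  | succ n ih =>
    intro s c
    rw [List.ofFn_succ, List.prod_cons]
    have e1 : (List.ofFn fun i : Fin (n+1) =>
        xF (s + ((i.succ : Fin (n+2)) : ℕ)) ^ c (s + ((i.succ : Fin (n+2)) : ℕ)))
        = (List.ofFn fun i : Fin (n+1) => xF ((s+1) + (i:ℕ)) ^ c ((s+1) + (i:ℕ))) := by
      congr 1
      funext i
      have : s + ((i.succ : Fin (n+2)) : ℕ) = (s+1) + (i:ℕ) := by
        simp [Fin.val_succ]
        omega
      rw [this]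
    rw [e1, ih (s+1) c]
    have e2 : s + ((0 : Fin (n+2)) : ℕ) = s := by simp
    rw [e2]
    conv_rhs => rw [posF]

lemma posPart_eq_posF (n : ℕ) (c : Fin (n+1) → ℕ) :
    posPart c = posF (fun i => if h : i < n+1 then c ⟨i, h⟩ else 0) 0 (n+1) := by
  have hfe : ∀ i : Fin (n+1),
      xF (0 + (i:ℕ)) ^ (if h : 0 + (i:ℕ) < n+1 then c ⟨0 + (i:ℕ), h⟩ else 0)
        = xF (i:ℕ) ^ c i := by
    intro i
    simp only [zero_add]
    rw [dif_pos i.isLt]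
  unfold _root_.posPart
  rw [← ofFn_posF n 0 _]
  congr 1
  exact congrArg List.ofFn (funext fun i => (hfe i).symm)

lemma elt_one (a b : ℕ → ℕ) (N : ℕ) (h : ∀ i, a i = 0 ∧ b i = 0) : elt a b N = 1 := by
  rw [elt, posF_zero a N 0 (fun i _ _ => (h i).1), posF_zero b N 0 (fun i _ _ => (h i).2)]
  simp

end ThompsonNF

/-- Every nonidentity element of Thompson's group `F` has a unique normal form. -/
theorem thompson_normal_form (f : ThompsonF) (hf : f ≠ 1) :
    ∃! nf : Σ n : ℕ, (Fin (n + 1) → ℕ) × (Fin (n + 1) → ℕ), IsNormalForm f nf := by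
  classical
  obtain ⟨a, b, N, hBa, hBb, hNC, hE⟩ := ThompsonNF.exists_nf f
  have hnz : ∃ i, 0 < a i + b i := by
    by_contra h
    push_neg at h
    apply hf
    rw [hE]
    exact ThompsonNF.elt_one a b N (fun i => by have := h i; omega)
  obtain ⟨i0, hi0⟩ := hnz
  have hi0N : i0 < N := by
    by_contra hc
    rw [hBa i0 (by omega), hBb i0 (by omega)] at hi0
    omega
  set n := Nat.findGreatest (fun i => 0 < a i + b i) N with hn
  have hnpos : 0 < a n + b n :=
    Nat.findGreatest_spec (P := fun i => 0 < a i + b i) (le_of_lt hi0N) hi0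
  have habove : ∀ j, n < j → a j = 0 ∧ b j = 0 := by
    intro j hj
    by_cases hjN : j ≤ N
    · have hng := Nat.findGreatest_is_greatest hj hjN
      constructor <;> omega
    · exact ⟨hBa j (by omega), hBb j (by omega)⟩
  have hBa1 : ThompsonNF.Bd (n+1) a := fun j hj => (habove j (by omega)).1
  have hBb1 : ThompsonNF.Bd (n+1) b := fun j hj => (habove j (by omega)).2
  have hEn : f = ThompsonNF.elt a b (n+1) := by
    rw [hE]
    rcases le_total N (n+1) with h | h
    · exact (ThompsonNF.elt_pad a b N (n+1) hBa hBb h).symm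
    · exact ThompsonNF.elt_pad a b (n+1) N hBa1 hBb1 h
  have hPA : posPart (fun i : Fin (n+1) => a i) = ThompsonNF.posF a 0 (n+1) := by
    rw [ThompsonNF.posPart_eq_posF]
    apply ThompsonNF.posF_congr
    intro i h1 h2
    rw [dif_pos (by omega : i < n+1)]
  have hPB : posPart (fun i : Fin (n+1) => b i) = ThompsonNF.posF b 0 (n+1) := by
    rw [ThompsonNF.posPart_eq_posF]
    apply ThompsonNF.posF_congr
    intro i h1 h2
    rw [dif_pos (by omega : i < n+1)]
  refine ⟨⟨n, (fun i : Fin (n+1) => a i, fun i : Fin (n+1) => b i)⟩, ⟨?_, ?_, ?_⟩, ?_⟩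
  · show f = posPart (fun i : Fin (n+1) => a i) * (posPart (fun i : Fin (n+1) => b i))⁻¹
    rw [hEn, ThompsonNF.elt, hPA, hPB]
  · show Xor' (0 < a n) (0 < b n)
    have hnotboth : ¬ (0 < a n ∧ 0 < b n) := by
      rintro ⟨h1, h2⟩
      have h3 := hNC n h1 h2
      have h4 := habove (n+1) (by omega)
      omega
    rcases Nat.eq_zero_or_pos (a n) with h | h
    · exact Or.inr ⟨by omega, by omega⟩
    · exact Or.inl ⟨h, fun hb => hnotboth ⟨h, hb⟩⟩
  · intro i h1 h2
    exact hNC i.val h1 h2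
  · rintro ⟨ny, A', B'⟩ ⟨hy1, hy2, hy3⟩
    dsimp only at hy1 hy2 hy3
    set a' : ℕ → ℕ := fun i => if h : i < ny+1 then A' ⟨i, h⟩ else 0 with ha'
    set b' : ℕ → ℕ := fun i => if h : i < ny+1 then B' ⟨i, h⟩ else 0 with hb'
    have hBa' : ThompsonNF.Bd (ny+1) a' := by
      intro j hj
      simp only [ha']
      rw [dif_neg (by omega)]
    have hBb' : ThompsonNF.Bd (ny+1) b' := by
      intro j hj
      simp only [hb']
      rw [dif_neg (by omega)]
    have haval : ∀ (i : ℕ) (h : i < ny+1), a' i = A' ⟨i, h⟩ := by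
      intro i h
      simp only [ha']
      rw [dif_pos h]
    have hbval : ∀ (i : ℕ) (h : i < ny+1), b' i = B' ⟨i, h⟩ := by
      intro i h
      simp only [hb']
      rw [dif_pos h]
    have hNC' : ThompsonNF.NC a' b' := by
      intro i h1 h2
      have hi : i < ny+1 := by
        by_contra hc
        rw [hBa' i (by omega)] at h1
        omega
      rcases Nat.lt_or_ge i ny with hlt | hge
      · have hi2 : i + 1 < ny + 1 := by omega
        have hc1 : A' ((⟨i, hlt⟩ : Fin ny).castSucc) = a' i := by
          rw [haval i hi]; exact congrArg A' (Fin.ext rfl)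
        have hc2 : B' ((⟨i, hlt⟩ : Fin ny).castSucc) = b' i := by
          rw [hbval i hi]; exact congrArg B' (Fin.ext rfl)
        have hc3 : A' ((⟨i, hlt⟩ : Fin ny).succ) = a' (i+1) := by
          rw [haval (i+1) hi2]; exact congrArg A' (Fin.ext rfl)
        have hc4 : B' ((⟨i, hlt⟩ : Fin ny).succ) = b' (i+1) := by
          rw [hbval (i+1) hi2]; exact congrArg B' (Fin.ext rfl)
        have key := hy3 ⟨i, hlt⟩ (by rw [hc1]; exact h1) (by rw [hc2]; exact h2)
        rw [hc3, hc4] at key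
        exact key
      · have hiny : i = ny := by omega
        subst hiny
        exfalso
        rw [haval i (by omega)] at h1
        rw [hbval i (by omega)] at h2
        have hlast : (⟨i, by omega⟩ : Fin (i+1)) = Fin.last i := rfl
        rw [hlast] at h1 h2
        rcases hy2 with ⟨_, hneg⟩ | ⟨_, hneg⟩
        · exact hneg h2
        · exact hneg h1
    have hfy : f = ThompsonNF.elt a' b' (ny+1) := by
      have h1 : f = posPart A' * (posPart B')⁻¹ := hy1
      rw [h1, ThompsonNF.elt, ThompsonNF.posPart_eq_posF, ThompsonNF.posPart_eq_posF]
    set M := max (n+1) (ny+1) with hM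
    have hMeq : ThompsonNF.elt a b M = ThompsonNF.elt a' b' M := by
      rw [ThompsonNF.elt_pad a b (n+1) M hBa1 hBb1 (by omega),
        ThompsonNF.elt_pad a' b' (ny+1) M hBa' hBb' (by omega), ← hEn, ← hfy]
    have hinj := ThompsonNF.elt_inj (N := M)
      (fun j hj => hBa1 j (by omega)) (fun j hj => hBb1 j (by omega))
      (fun j hj => hBa' j (by omega)) (fun j hj => hBb' j (by omega))
      hNC hNC' hMeq
    have hny_pos : 0 < a' ny + b' ny := by
      rw [haval ny (by omega), hbval ny (by omega)]
      have hlast : (⟨ny, by omega⟩ : Fin (ny+1)) = Fin.last ny := rfl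
      rw [hlast]
      rcases hy2 with ⟨hxa, _⟩ | ⟨hxb, _⟩ <;> omega
    have hnyn : ny = n := by
      have e1 : 0 < a ny + b ny := by
        rw [(hinj ny).1, (hinj ny).2]
        exact hny_pos
      have e2 : 0 < a' n + b' n := by
        rw [← (hinj n).1, ← (hinj n).2]
        exact hnpos
      by_contra hne
      rcases Nat.lt_or_ge ny n with hlt | hge
      · rw [hBa' n (by omega), hBb' n (by omega)] at e2
        omega
      · have := habove ny (by omega)
        omega
    subst hnyn
    have hAeq : A' = fun i : Fin (n+1) => a i := by
      funext i
      have h9 : a' (i : ℕ) = A' i := by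
        rw [haval (i:ℕ) i.isLt]
      rw [← h9, ← (hinj (i:ℕ)).1]
    have hBeq : B' = fun i : Fin (n+1) => b i := by
      funext i
      have h9 : b' (i : ℕ) = B' i := by
        rw [hbval (i:ℕ) i.isLt]
      rw [← h9, ← (hinj (i:ℕ)).2]
    rw [hAeq, hBeq]
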